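/- Let R be a unital non-associative ring, I a set well-ordered by ≪, and Δ = {δ_i}_{i∈I} a commutative family of additive maps δ_i : R → R with δ_i(1) = 0, and let π^f_g be defined by π^f_g(r) = C(f,g)·δ^{f−g}(r) if g ≤ f and π^f_g = 0 otherwise. Then π satisfies (D5), i.e. π^f_g(rs) = Σ_{h ∈ ℕ^(I)} π^f_h(r)·π^h_g(s) for all f,g ∈ ℕ^(I) and all r,s ∈ R, if and only if every δ_i (i ∈ I) is a derivation on R, i.e. δ_i(rs) = δ_i(r)s + r δ_i(s) for all r,s ∈ R. -/

import Mathlib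

open scoped Classical

/-! Framework for the differential monoid ring `S = R[ℕ^(I); π]` associated with a
family `Δ = {δ_i}_{i ∈ I}` of additive maps `δ_i : R → R` with `δ_i(1) = 0`, where
`I` is well-ordered by `≪` (encoded as a `LinearOrder` with well-founded `<`).
Here `ℕ^(I)` is the additive monoid `I →₀ ℕ` of finitely supported functions, the
ring `S` is `(I →₀ ℕ) →₀ R` (with `Finsupp.single f r` representing `r x^f`), and
`π^f_g(r) = C(f,g)·δ^{f-g}(r)` for `g ≤ f` and `π^f_g = 0` otherwise. -/

/-- A two-sided ideal with respect to a (possibly non-associative, non-unital)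
multiplication `m` on an additive group `A`. -/
structure IsIdealWith {A : Type*} [AddCommGroup A] (m : A → A → A) (J : Set A) : Prop where
  zero_mem : (0 : A) ∈ J
  add_mem : ∀ {x y : A}, x ∈ J → y ∈ J → x + y ∈ J
  neg_mem : ∀ {x : A}, x ∈ J → -x ∈ J
  mul_mem_left : ∀ (r : A) {x : A}, x ∈ J → m r x ∈ J
  mul_mem_right : ∀ {x : A} (r : A), x ∈ J → m x r ∈ J

/-- The subset `F` of `A` is a field with respect to the multiplication `m` with
identity `one`. -/
def IsFieldWith {A : Type*} [AddCommGroup A] (m : A → A → A) (one : A) (F : Set A) : Prop :=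
  one ∈ F ∧ (∀ x ∈ F, ∀ y ∈ F, x + y ∈ F) ∧ (∀ x ∈ F, -x ∈ F) ∧
  (∀ x ∈ F, ∀ y ∈ F, m x y ∈ F) ∧ (∀ x ∈ F, ∀ y ∈ F, m x y = m y x) ∧
  (∀ x ∈ F, x ≠ 0 → ∃ y ∈ F, m x y = one ∧ m y x = one)

/-- `A` is simple w.r.t. the multiplication `m`: `{0}` and `A` are its only
two-sided ideals. -/
def SimpleWith {A : Type*} [AddCommGroup A] (m : A → A → A) : Prop :=
  ∀ J : Set A, IsIdealWith m J → J = {0} ∨ J = Set.univ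

/-- The center of `A` w.r.t. the multiplication `m`: elements commuting with all
elements whose associator with any two elements (in any position) vanishes. -/
def centerWith {A : Type*} [AddCommGroup A] (m : A → A → A) : Set A :=
  {u | (∀ v, m u v = m v u) ∧ (∀ v w, m (m u v) w = m u (m v w)) ∧
       (∀ v w, m (m v u) w = m v (m u w)) ∧ (∀ v w, m (m v w) u = m v (m w u))}

variable {R : Type*} [NonAssocRing R] {I : Type*} [LinearOrder I]

/-- `δ^f = δ_{i₁}^{f(i₁)} ∘ ⋯ ∘ δ_{iₘ}^{f(iₘ)}` where `i₁ ≪ ⋯ ≪ iₘ` is the support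
of `f` listed in increasing order. -/
def deltaPow (δ : I → R → R) (f : I →₀ ℕ) : R → R :=
  ((f.support.sort (· ≤ ·)).map fun i => (δ i)^[f i]).foldr (· ∘ ·) id

/-- `C(f,g) = ∏ᵢ binomial (f i) (g i)` (equal to `0` whenever `g ≰ f`). -/
def binomF (f g : I →₀ ℕ) : ℕ :=
  ∏ i ∈ f.support ∪ g.support, Nat.choose (f i) (g i)

/-- `π^f_g(r) = C(f,g)·δ^{f-g}(r)` for `g ≤ f`, and `π^f_g = 0` otherwise. -/
noncomputable def piN (δ : I → R → R) (f g : I →₀ ℕ) (r : R) : R :=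
  if g ≤ f then (binomF f g) • deltaPow δ (f - g) r else 0

/-- `R_Δ = ⋂ᵢ ker δᵢ`. -/
def RDelta (δ : I → R → R) : Set R := {r | ∀ i : I, δ i r = 0}

/-- `Δ` is a set of left kernel derivations: each `δᵢ` is left `R_Δ`-linear. -/
def LeftKernel (δ : I → R → R) : Prop :=
  ∀ i : I, ∀ s ∈ RDelta δ, ∀ r : R, δ i (s * r) = s * δ i r

/-- `Δ` is a set of right kernel derivations: each `δᵢ` is right `R_Δ`-linear. -/
def RightKernel (δ : I → R → R) : Prop :=
  ∀ i : I, ∀ r : R, ∀ s ∈ RDelta δ, δ i (r * s) = δ i r * s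

/-- `R` is `Δ`-simple: `{0}` and `R` are its only `Δ`-invariant ideals. -/
def DeltaSimple (δ : I → R → R) : Prop :=
  ∀ J : Set R, IsIdealWith (· * ·) J → (∀ i : I, ∀ r ∈ J, δ i r ∈ J) →
    J = {0} ∨ J = Set.univ

/-- The multiplication of the differential monoid ring `S = R[ℕ^(I); π]` on
`(I →₀ ℕ) →₀ R`: the biadditive extension of
`(r x^f)(s x^g) = Σ_h r π^f_h(s) x^{h+g}`. -/
noncomputable def mulN (δ : I → R → R) (u v : (I →₀ ℕ) →₀ R) : (I →₀ ℕ) →₀ R :=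
  u.sum fun f r => v.sum fun g s =>
    ∑ h ∈ Finset.Iic f, Finsupp.single (h + g) (r * piN δ f h s)

set_option linter.unusedSectionVars false

lemma end_pow (g : Function.End R) (n : ℕ) : (g ^ n : Function.End R) = (g : R → R)^[n] := by
  induction n with
  | zero => rfl
  | succ n ih => rw [pow_succ, ih]; exact (Function.iterate_succ (g : R → R) n).symm

lemma multiset_ncp_eq {M : Type*} [Monoid M] {m : Multiset M} {l : List M} (h : m = ↑l) (c) :
    m.noncommProd c = l.prod := by subst h; exact Multiset.noncommProd_coe l c

section
variable (δ : I → R → R) (hcomm : ∀ i j : I, δ i ∘ δ j = δ j ∘ δ i)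

def DD : I → Function.End R := δ

include hcomm in
lemma commE (i j : I) : Commute (DD δ i) (DD δ j) := hcomm i j

include hcomm in
lemma pairwise_commE (s : Finset I) (f : I →₀ ℕ) :
    (↑s : Set I).Pairwise (Function.onFun Commute fun i => DD δ i ^ f i) :=
  fun i _ j _ _ => (commE δ hcomm i j).pow_pow _ _

noncomputable def Q (f : I →₀ ℕ) : Function.End R :=
  f.support.noncommProd (fun i => DD δ i ^ f i)
    (pairwise_commE δ hcomm f.support f)

include hcomm

lemma deltaPow_eq_Q (f : I →₀ ℕ) : deltaPow δ f = Q δ hcomm f := by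
  rw [deltaPow, Q, Finset.noncommProd,
    multiset_ncp_eq (l := (f.support.sort (· ≤ ·)).map (fun i => DD δ i ^ f i))
      (by rw [← Multiset.map_coe, Finset.sort_eq]),
    List.prod_eq_foldr]
  induction (f.support.sort (· ≤ ·)) with
  | nil => rfl
  | cons a l ih => simp only [List.map_cons, List.foldr_cons, ih]; rw [end_pow]; rfl

lemma Q_superset (f : I →₀ ℕ) {s : Finset I} (hs : f.support ⊆ s) :
    Q δ hcomm f = s.noncommProd (fun i => DD δ i ^ f i)
      (pairwise_commE δ hcomm s f) := by
  have e : s = f.support ∪ (s \ f.support) := (Finset.union_sdiff_of_subset hs).symm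
  rw [e,
    Finset.noncommProd_union_of_disjoint Finset.disjoint_sdiff]
  rw [Finset.noncommProd_eq_pow_card (s \ f.support) _ _ (1 : Function.End R) (fun x hx => by
    have : f x = 0 := Finsupp.notMem_support_iff.mp (Finset.mem_sdiff.mp hx).2
    rw [this, pow_zero]), one_pow, mul_one, Q]

lemma Q_add (f g : I →₀ ℕ) : Q δ hcomm (f + g) = Q δ hcomm f * Q δ hcomm g := by
  have c1 : ∀ i ∈ f.support ∪ g.support, ∀ j ∈ f.support ∪ g.support, i ≠ j →
      Commute (DD δ i ^ f i) (DD δ j ^ f j) :=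
    fun i _ j _ _ => (commE δ hcomm i j).pow_pow _ _
  have c2 : ∀ i ∈ f.support ∪ g.support, ∀ j ∈ f.support ∪ g.support, i ≠ j →
      Commute (DD δ i ^ g i) (DD δ j ^ g j) :=
    fun i _ j _ _ => (commE δ hcomm i j).pow_pow _ _
  have c3 : ∀ i ∈ f.support ∪ g.support, ∀ j ∈ f.support ∪ g.support, i ≠ j →
      Commute (DD δ i ^ g i) (DD δ j ^ f j) :=
    fun i _ j _ _ => (commE δ hcomm i j).pow_pow _ _
  rw [Q_superset δ hcomm (f+g) (Finsupp.support_add),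
      Q_superset δ hcomm f (Finset.subset_union_left (s₂ := g.support)),
      Q_superset δ hcomm g (Finset.subset_union_right (s₁ := f.support)),
      ← Finset.noncommProd_mul_distrib _ _ c1 c2 c3]
  exact Finset.noncommProd_congr rfl (fun i _ => by
    show DD δ i ^ (f i + g i) = _
    rw [pow_add]; rfl) _

lemma deltaPow_addIdx (f g : I →₀ ℕ) :
    deltaPow δ (f + g) = deltaPow δ f ∘ deltaPow δ g := by
  rw [deltaPow_eq_Q δ hcomm, deltaPow_eq_Q δ hcomm, deltaPow_eq_Q δ hcomm, Q_add δ hcomm]; rfl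

omit hcomm in
lemma deltaPow_zeroIdx : deltaPow δ 0 = id := by simp [deltaPow]

lemma deltaPow_single (i : I) (n : ℕ) : deltaPow δ (Finsupp.single i n) = (δ i)^[n] := by
  rcases Nat.eq_zero_or_pos n with h | h
  · subst h; simp [deltaPow]
  · rw [deltaPow_eq_Q δ hcomm, Q,
      Finset.noncommProd_congr (Finsupp.support_single_ne_zero _ h.ne')
        (g := fun _ => DD δ i ^ n)
        (fun j hj => by rw [Finset.mem_singleton] at hj; subst hj; rw [Finsupp.single_eq_same]) _,
      Finset.noncommProd_singleton, end_pow]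
    rfl

end

-- stage 2
section

lemma binomF_eq_prod (f g : I →₀ ℕ) {t : Finset I} (hf : f.support ⊆ t) (hg : g.support ⊆ t) :
    binomF f g = ∏ j ∈ t, (f j).choose (g j) := by
  rw [binomF]
  apply Finset.prod_subset (Finset.union_subset hf hg)
  intro j _ hnj
  rw [Finset.mem_union] at hnj
  push_neg at hnj
  rw [Finsupp.notMem_support_iff.mp hnj.1, Finsupp.notMem_support_iff.mp hnj.2,
    Nat.choose_self]

lemma binomF_zero_of_not_le {f g : I →₀ ℕ} (h : ¬ g ≤ f) : binomF f g = 0 := by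
  rw [Finsupp.le_def] at h
  push_neg at h
  obtain ⟨j, hj⟩ := h
  have hjs : j ∈ f.support ∪ g.support :=
    Finset.mem_union_right _ (Finsupp.mem_support_iff.mpr (by omega))
  exact Finset.prod_eq_zero hjs (Nat.choose_eq_zero_of_lt hj)

lemma binomF_self (f : I →₀ ℕ) : binomF f f = 1 := by
  simp [binomF, Nat.choose_self]

lemma binomF_zero_right (f : I →₀ ℕ) : binomF f 0 = 1 := by
  simp [binomF]

lemma pascal (g k : I →₀ ℕ) (i : I) :
    binomF (g + Finsupp.single i 1) k =
      binomF g k + (if Finsupp.single i 1 ≤ k then binomF g (k - Finsupp.single i 1) else 0) := by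
  classical
  set e : I →₀ ℕ := Finsupp.single i 1 with he
  set u : Finset I := (g.support ∪ k.support).erase i with hu
  have hiu : i ∉ u := Finset.notMem_erase i _
  set t : Finset I := insert i u with ht
  have hsub : ∀ j, j ∈ g.support ∪ k.support → j ∈ t := by
    intro j hj
    by_cases hji : j = i
    · subst hji; exact Finset.mem_insert_self _ _
    · exact Finset.mem_insert_of_mem (Finset.mem_erase.mpr ⟨hji, hj⟩)
  have hgt : g.support ⊆ t := fun j hj => hsub j (Finset.mem_union_left _ hj)
  have hkt : k.support ⊆ t := fun j hj => hsub j (Finset.mem_union_right _ hj)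
  have het : (g + e).support ⊆ t := by
    intro j hj
    have := Finsupp.support_add hj
    rw [Finset.mem_union] at this
    rcases this with h' | h'
    · exact hgt h'
    · rw [he, Finsupp.support_single_ne_zero _ one_ne_zero, Finset.mem_singleton] at h'
      subst h'; exact Finset.mem_insert_self _ _
  have hket : (k - e).support ⊆ t := fun j hj => hkt (Finsupp.support_tsub hj)
  rw [binomF_eq_prod _ _ het hkt, binomF_eq_prod _ _ hgt hkt, binomF_eq_prod _ _ hgt hket,
    ht, Finset.prod_insert hiu, Finset.prod_insert hiu, Finset.prod_insert hiu]
  have hgu : ∀ j ∈ u, ((g + e) j).choose (k j) = (g j).choose (k j) := by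
    intro j hj
    have hji : j ≠ i := (Finset.mem_erase.mp hj).1
    rw [Finsupp.add_apply, he, Finsupp.single_eq_of_ne' (Ne.symm hji), add_zero]
  have hku : ∀ j ∈ u, (g j).choose ((k - e) j) = (g j).choose (k j) := by
    intro j hj
    have hji : j ≠ i := (Finset.mem_erase.mp hj).1
    rw [Finsupp.tsub_apply, he, Finsupp.single_eq_of_ne' (Ne.symm hji), Nat.sub_zero]
  rw [Finset.prod_congr rfl hgu, Finset.prod_congr rfl hku]
  set P : ℕ := ∏ j ∈ u, (g j).choose (k j)
  have hgei : (g + e) i = g i + 1 := by rw [Finsupp.add_apply, he, Finsupp.single_eq_same]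
  have hle : (e ≤ k) ↔ 1 ≤ k i := Finsupp.single_le_iff
  rcases Nat.eq_zero_or_pos (k i) with h0 | h0
  · rw [if_neg (by rw [hle]; omega), add_zero, hgei, h0, Nat.choose_zero_right,
      Nat.choose_zero_right]
  · obtain ⟨m, hm⟩ : ∃ m, k i = m + 1 := ⟨k i - 1, by omega⟩
    rw [if_pos (hle.mpr h0), hgei, hm, Nat.choose_succ_succ,
      Finsupp.tsub_apply, he, Finsupp.single_eq_same, hm, Nat.add_sub_cancel, Nat.add_mul]
    ring
end

-- stage 3
section
variable (δ : I → R → R) (hadd : ∀ (i : I) (r s : R), δ i (r + s) = δ i r + δ i s)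
  (hcomm : ∀ i j : I, δ i ∘ δ j = δ j ∘ δ i)

include hadd in
lemma iter_add (i : I) (n : ℕ) (x y : R) :
    (δ i)^[n] (x + y) = (δ i)^[n] x + (δ i)^[n] y := by
  induction n generalizing x y with
  | zero => rfl
  | succ n ih => rw [Function.iterate_succ', Function.comp_apply, Function.comp_apply,
      Function.comp_apply, ih, hadd]

include hadd hcomm in
lemma deltaPow_apply_add (f : I →₀ ℕ) (x y : R) :
    deltaPow δ f (x + y) = deltaPow δ f x + deltaPow δ f y := by
  induction f using Finsupp.induction generalizing x y with
  | zero => simp [deltaPow_zeroIdx]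
  | single_add a b f _ _ ih =>
    rw [deltaPow_addIdx δ hcomm, deltaPow_single δ hcomm]
    simp only [Function.comp_apply]
    rw [ih, iter_add δ hadd]

noncomputable def DP (f : I →₀ ℕ) : R →+ R :=
  AddMonoidHom.mk' (deltaPow δ f) (deltaPow_apply_add δ hadd hcomm f)

lemma DP_apply (f : I →₀ ℕ) (x : R) : DP δ hadd hcomm f x = deltaPow δ f x := rfl

include hadd hcomm in
lemma leibniz_step (hder : ∀ (i : I) (r s : R), δ i (r * s) = δ i r * s + r * δ i s)
    (g : I →₀ ℕ) (i : I)
    (IH : ∀ r s : R, deltaPow δ g (r * s) =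
      ∑ k ∈ Finset.Iic g, binomF g k • (deltaPow δ (g - k) r * deltaPow δ k s))
    (r s : R) :
    deltaPow δ (g + Finsupp.single i 1) (r * s) =
      ∑ k ∈ Finset.Iic (g + Finsupp.single i 1),
        binomF (g + Finsupp.single i 1) k •
          (deltaPow δ (g + Finsupp.single i 1 - k) r * deltaPow δ k s) := by
  classical
  set e : I →₀ ℕ := Finsupp.single i 1 with he
  have hDe : ∀ (h : I →₀ ℕ) (x : R), δ i (deltaPow δ h x) = deltaPow δ (h + e) x := by
    intro h x
    rw [add_comm, deltaPow_addIdx δ hcomm, he, deltaPow_single δ hcomm,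
      Function.iterate_one, Function.comp_apply]
  have hδi : ∀ x y : R, δ i (x + y) = δ i x + δ i y := hadd i
  have hδn : ∀ (n : ℕ) (x : R), δ i (n • x) = n • δ i x := by
    intro n x
    exact map_nsmul (AddMonoidHom.mk' (δ i) hδi) n x
  have step1 : deltaPow δ (g + e) (r * s) = δ i (deltaPow δ g (r * s)) := (hDe g _).symm
  rw [step1, IH]
  have hsum : δ i (∑ k ∈ Finset.Iic g, binomF g k • (deltaPow δ (g - k) r * deltaPow δ k s)) =
      ∑ k ∈ Finset.Iic g, δ i (binomF g k • (deltaPow δ (g - k) r * deltaPow δ k s)) :=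
    map_sum (AddMonoidHom.mk' (δ i) hδi) _ _
  rw [hsum]
  have step2 : ∀ k ∈ Finset.Iic g,
      δ i (binomF g k • (deltaPow δ (g - k) r * deltaPow δ k s)) =
        binomF g k • (deltaPow δ (g + e - k) r * deltaPow δ k s) +
        binomF g k • (deltaPow δ (g - k) r * deltaPow δ (k + e) s) := by
    intro k hk
    have hkg : k ≤ g := Finset.mem_Iic.mp hk
    rw [hδn, hder, hDe, hDe, tsub_add_eq_add_tsub hkg, smul_add]
  rw [Finset.sum_congr rfl step2, Finset.sum_add_distrib]
  have hsub : Finset.Iic g ⊆ Finset.Iic (g + e) := Finset.Iic_subset_Iic.mpr le_self_add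
  have hA : ∑ k ∈ Finset.Iic g, binomF g k • (deltaPow δ (g + e - k) r * deltaPow δ k s) =
      ∑ k ∈ Finset.Iic (g + e), binomF g k • (deltaPow δ (g + e - k) r * deltaPow δ k s) := by
    apply Finset.sum_subset hsub
    intro k _ hk
    rw [binomF_zero_of_not_le (fun h => hk (Finset.mem_Iic.mpr h)), zero_smul]
  have hB : ∑ k ∈ Finset.Iic g, binomF g k • (deltaPow δ (g - k) r * deltaPow δ (k + e) s) =
      ∑ k ∈ Finset.Iic (g + e),
        (if e ≤ k then binomF g (k - e) else 0) • (deltaPow δ (g + e - k) r * deltaPow δ k s) := by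
    rw [← Finset.sum_filter_add_sum_filter_not (Finset.Iic (g + e)) (e ≤ ·)]
    have h2 : ∑ k ∈ (Finset.Iic (g + e)).filter (fun k => ¬ e ≤ k),
        (if e ≤ k then binomF g (k - e) else 0) • (deltaPow δ (g + e - k) r * deltaPow δ k s)
        = 0 := by
      apply Finset.sum_eq_zero
      intro k hk
      rw [if_neg (Finset.mem_filter.mp hk).2, zero_smul]
    rw [h2, add_zero]
    apply Finset.sum_nbij' (i := fun k => k + e) (j := fun k => k - e)
    · intro k hk
      rw [Finset.mem_filter, Finset.mem_Iic]
      exact ⟨add_le_add_left (Finset.mem_Iic.mp hk) e, le_add_self⟩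
    · intro k hk
      rw [Finset.mem_filter, Finset.mem_Iic] at hk
      rw [Finset.mem_Iic]
      exact tsub_le_iff_right.mpr hk.1
    · intro k _; exact add_tsub_cancel_right k e
    · intro k hk
      exact tsub_add_cancel_of_le (Finset.mem_filter.mp hk).2
    · intro k hk
      rw [if_pos (le_add_self (a := e) (b := k)), add_tsub_cancel_right,
        add_tsub_add_eq_tsub_right]
  rw [hA, hB, ← Finset.sum_add_distrib]
  apply Finset.sum_congr rfl
  intro k _
  rw [← add_nsmul, ← pascal]

end

-- stage 4
section
variable (δ : I → R → R) (hadd : ∀ (i : I) (r s : R), δ i (r + s) = δ i r + δ i s)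
  (hcomm : ∀ i j : I, δ i ∘ δ j = δ j ∘ δ i)

include hadd hcomm in
lemma leibniz (hder : ∀ (i : I) (r s : R), δ i (r * s) = δ i r * s + r * δ i s)
    (f : I →₀ ℕ) (r s : R) :
    deltaPow δ f (r * s) =
      ∑ k ∈ Finset.Iic f, binomF f k • (deltaPow δ (f - k) r * deltaPow δ k s) := by
  classical
  suffices H : ∀ (N : ℕ) (f : I →₀ ℕ), (f.sum fun _ n => n) = N → ∀ r s : R,
      deltaPow δ f (r * s) =
        ∑ k ∈ Finset.Iic f, binomF f k • (deltaPow δ (f - k) r * deltaPow δ k s) from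
    H _ f rfl r s
  intro N
  induction N with
  | zero =>
    intro f hf r s
    have hf0 : f = 0 := by
      ext j
      by_contra hj
      have hjs : j ∈ f.support := Finsupp.mem_support_iff.mpr hj
      have := (Finset.sum_eq_zero_iff.mp hf) j hjs
      exact hj this
    subst hf0
    have hIic : Finset.Iic (0 : I →₀ ℕ) = {0} := by
      ext k
      simp [Finset.mem_Iic, nonpos_iff_eq_zero]
    rw [hIic, Finset.sum_singleton, tsub_zero, binomF_zero_right, one_smul, deltaPow_zeroIdx]
    rfl
  | succ N ih =>
    intro f hf r s
    have hfne : f ≠ 0 := by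
      intro h; subst h; simp [Finsupp.sum] at hf
    obtain ⟨i, hi⟩ : ∃ i, f i ≠ 0 := by
      by_contra h; push_neg at h; exact hfne (Finsupp.ext h)
    set e : I →₀ ℕ := Finsupp.single i 1 with he
    have hef : e ≤ f := Finsupp.single_le_iff.mpr (by omega)
    set g : I →₀ ℕ := f - e with hg
    have hfge : f = g + e := (tsub_add_cancel_of_le hef).symm
    have hgsum : (g.sum fun _ n => n) = N := by
      have h1 : ((g + e).sum fun _ n => n) = (g.sum fun _ n => n) + (e.sum fun _ n => n) :=
        Finsupp.sum_add_index' (fun _ => rfl) (fun _ _ _ => rfl)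
      have h2 : (e.sum fun _ n => n) = 1 := by
        rw [he, Finsupp.sum_single_index]; rfl
      rw [← hfge, hf, h2] at h1
      omega
    rw [hfge]
    exact leibniz_step δ hadd hcomm hder g i (ih g hgsum) r s

end

-- stage 5
section

lemma binom_reindex {f g k : I →₀ ℕ} (hgf : g ≤ f) (hk : k ≤ f - g) :
    binomF f g * binomF (f - g) k = binomF f (k + g) * binomF (k + g) g := by
  classical
  set t : Finset I := f.support ∪ g.support ∪ k.support with ht
  have hft : f.support ⊆ t := fun j hj => Finset.mem_union_left _ (Finset.mem_union_left _ hj)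
  have hgt : g.support ⊆ t := fun j hj => Finset.mem_union_left _ (Finset.mem_union_right _ hj)
  have hkt : k.support ⊆ t := fun j hj => Finset.mem_union_right _ hj
  have hfgt : (f - g).support ⊆ t := fun j hj => hft (Finsupp.support_tsub hj)
  have hkgt : (k + g).support ⊆ t := fun j hj => by
    rcases Finset.mem_union.mp (Finsupp.support_add hj) with h | h
    exacts [hkt h, hgt h]
  rw [binomF_eq_prod f g hft hgt, binomF_eq_prod (f - g) k hfgt hkt,
    binomF_eq_prod f (k + g) hft hkgt, binomF_eq_prod (k + g) g hkgt hgt,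
    ← Finset.prod_mul_distrib, ← Finset.prod_mul_distrib]
  apply Finset.prod_congr rfl
  intro j _
  have h1 : g j ≤ f j := Finsupp.le_def.mp hgf j
  have h2 : k j ≤ f j - g j := by
    have := Finsupp.le_def.mp hk j
    rwa [Finsupp.tsub_apply] at this
  rw [Finsupp.tsub_apply, Finsupp.add_apply]
  have := Nat.choose_mul (n := f j) (k := k j + g j) (s := g j) (by omega)
  rw [this, Nat.add_sub_cancel]
end


/-- For a commutative family `Δ` of additive maps with
`δᵢ(1) = 0`, the family `π` satisfies (D5) iff every `δᵢ` is a derivation on `R`.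
(The sum `Σ_{h ∈ ℕ^(I)} π^f_h(r)·π^h_g(s)` reduces to a sum over `h ≤ f`,
since `π^f_h = 0` for `h ≰ f`.) -/
theorem stmt14 {R : Type*} [NonAssocRing R] {I : Type*} [LinearOrder I]
    [WellFoundedLT I] (δ : I → R → R)
    (hadd : ∀ (i : I) (r s : R), δ i (r + s) = δ i r + δ i s)
    (h1 : ∀ i : I, δ i 1 = 0)
    (hcomm : ∀ i j : I, δ i ∘ δ j = δ j ∘ δ i) :
    (∀ (f g : I →₀ ℕ) (r s : R),
        piN δ f g (r * s) = ∑ h ∈ Finset.Iic f, piN δ f h r * piN δ h g s) ↔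
    (∀ (i : I) (r s : R), δ i (r * s) = δ i r * s + r * δ i s) := by
  classical
  constructor
  · -- D5 → derivation
    intro hD5 i r s
    set e : I →₀ ℕ := Finsupp.single i 1 with he
    have hIic : Finset.Iic e = {0, e} := by
      ext k
      rw [Finset.mem_Iic, Finset.mem_insert, Finset.mem_singleton]
      constructor
      · intro hk
        have hki : k i ≤ 1 := by
          have := Finsupp.le_def.mp hk i
          rwa [he, Finsupp.single_eq_same] at this
        have hkj : ∀ j, j ≠ i → k j = 0 := by
          intro j hj
          have := Finsupp.le_def.mp hk j
          rw [he, Finsupp.single_eq_of_ne' (Ne.symm hj)] at this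
          omega
        rcases Nat.le_one_iff_eq_zero_or_eq_one.mp hki with h0 | hone
        · left; ext j
          by_cases hj : j = i
          · subst hj; exact h0
          · exact hkj j hj
        · right; ext j
          by_cases hj : j = i
          · subst hj; rw [hone, he, Finsupp.single_eq_same]
          · rw [hkj j hj, he, Finsupp.single_eq_of_ne' (Ne.symm hj)]
      · rintro (rfl | rfl)
        · exact zero_le
        · exact le_rfl
    have h0e : (0 : I →₀ ℕ) ≠ e := by
      intro h
      have := congrArg (fun k => k i) h
      simp [he] at this
    have key := hD5 e 0 r s
    rw [hIic, Finset.sum_pair h0e] at key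
    have dpe : deltaPow δ e = δ i := by
      rw [he, deltaPow_single δ hcomm, Function.iterate_one]
    have pe0 : ∀ x : R, piN δ e 0 x = δ i x := by
      intro x
      rw [piN, if_pos (zero_le (a := e)), binomF_zero_right, tsub_zero, dpe, one_smul]
    have p00 : ∀ x : R, piN δ 0 0 x = x := by
      intro x
      rw [piN, if_pos le_rfl, binomF_zero_right, tsub_zero, one_smul, deltaPow_zeroIdx, id]
    have pee : ∀ x : R, piN δ e e x = x := by
      intro x
      rw [piN, if_pos le_rfl, binomF_self, tsub_self, one_smul, deltaPow_zeroIdx, id]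
    rw [pe0, pe0, p00, pee, pe0] at key
    exact key
  · -- derivation → D5
    intro hder f g r s
    by_cases hgf : g ≤ f
    · rw [piN, if_pos hgf, leibniz δ hadd hcomm hder (f - g) r s, Finset.smul_sum]
      rw [← Finset.sum_filter_add_sum_filter_not (Finset.Iic f) (g ≤ ·)]
      have h2 : ∑ h ∈ (Finset.Iic f).filter (fun h => ¬ g ≤ h),
          piN δ f h r * piN δ h g s = 0 := by
        apply Finset.sum_eq_zero
        intro h hh
        simp only [piN]
        rw [if_neg (Finset.mem_filter.mp hh).2, mul_zero]
      rw [h2, add_zero]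
      apply Finset.sum_nbij' (i := fun k => k + g) (j := fun k => k - g)
      · intro k hk
        rw [Finset.mem_filter, Finset.mem_Iic]
        constructor
        · calc k + g ≤ (f - g) + g := add_le_add_left (Finset.mem_Iic.mp hk) g
            _ = f := tsub_add_cancel_of_le hgf
        · exact le_add_self
      · intro k hk
        rw [Finset.mem_filter, Finset.mem_Iic] at hk
        rw [Finset.mem_Iic]
        exact tsub_le_tsub_right hk.1 g
      · intro k _; exact add_tsub_cancel_right k g
      · intro k hk; exact tsub_add_cancel_of_le (Finset.mem_filter.mp hk).2
      · intro k hk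
        have hkfg : k ≤ f - g := Finset.mem_Iic.mp hk
        have hkgf : k + g ≤ f := by
          calc k + g ≤ (f - g) + g := add_le_add_left hkfg g
            _ = f := tsub_add_cancel_of_le hgf
        rw [piN, piN, if_pos hkgf, if_pos le_add_self, add_tsub_cancel_right,
          smul_mul_smul_comm, ← binom_reindex hgf hkfg, mul_smul]
        congr 2
        rw [tsub_add_eq_tsub_tsub_swap]
    · rw [piN, if_neg hgf]
      symm
      apply Finset.sum_eq_zero
      intro h hh
      have : ¬ g ≤ h := fun hgh => hgf (hgh.trans (Finset.mem_Iic.mp hh))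
      simp only [piN]
      rw [if_neg this, mul_zero]
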